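/- Let ‖·‖_K, ‖·‖_L be norms on ℝⁿ with ‖·‖_K ≤ ‖·‖_L ≤ λ‖·‖_K, let u : [0,∞) → [0,∞) be Lipschitz with u(0)=0 and Lipschitz constant ‖u‖_Lip > 0, let μ be a Borel probability measure on ℝⁿ, define U(x) = (u(‖x‖_L)/‖x‖_L)x on supp(μ), and let ν be the push-forward of μ by U. Let m_L be a median of ‖·‖_L and m a median of u(‖·‖_L), both with respect to μ, with m_L > 0. Denote by α_K the concentration function of (ℝⁿ, ‖·‖_K, μ) and by α_L that of (ℝⁿ, ‖·‖_L, ν). Then for every ε > 0 with 8·(α_K(ε/(7‖u‖_Lip λ)) + α_K(ε m/(7‖u‖_Lip² m_L))) ≤ 1, we have α_L(ε) ≤ 16·α_K(ε/(14‖u‖_Lip λ)). -/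

import Mathlib

open MeasureTheory Metric Set

/-- The `ε`-expansion of a set with respect to a distance function `d`. -/
def expandBy {X : Type*} (d : X → X → ℝ) (A : Set X) (ε : ℝ) : Set X :=
  {x | ∃ a ∈ A, d x a ≤ ε}

/-- The concentration function of a metric probability space, where the
metric is given by the distance function `d`. -/
noncomputable def concFn {X : Type*} [MeasurableSpace X] (d : X → X → ℝ)
    (μ : Measure X) (ε : ℝ) : ℝ :=
  sSup {r | ∃ A : Set X, MeasurableSet A ∧ (1 : ℝ)/2 ≤ (μ A).toReal ∧
    r = 1 - (μ (expandBy d A ε)).toReal}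

/-- `m` is a median of `f` with respect to `μ`. -/
def IsMedian {X : Type*} [MeasurableSpace X] (μ : Measure X) (f : X → ℝ) (m : ℝ) : Prop :=
  (1 : ℝ)/2 ≤ (μ {x | f x ≤ m}).toReal ∧ (1 : ℝ)/2 ≤ (μ {x | m ≤ f x}).toReal

lemma lip_aux {n : ℕ} (nL : Seminorm ℝ (Fin n → ℝ))
    (u : ℝ → ℝ) (Lu : ℝ) (hLu : 0 ≤ Lu) (hu0 : u 0 = 0)
    (hunn : ∀ t, 0 ≤ t → 0 ≤ u t)
    (hulip : ∀ s t, 0 ≤ s → 0 ≤ t → |u s - u t| ≤ Lu * |s - t|)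
    (x y : Fin n → ℝ) (hx : 0 < nL x) (hxy : nL x ≤ nL y) :
    nL ((u (nL x) / nL x) • x - (u (nL y) / nL y) • y) ≤ 3 * Lu * nL (x - y) := by
  have hy : 0 < nL y := lt_of_lt_of_le hx hxy
  set rx := nL x with hrx
  set ry := nL y with hry
  have hux : 0 ≤ u rx := hunn _ hx.le
  have huy : 0 ≤ u ry := hunn _ hy.le
  have huxb : u rx ≤ Lu * rx := by
    have := hulip rx 0 hx.le le_rfl
    rw [hu0, sub_zero, sub_zero, abs_of_nonneg hux, abs_of_nonneg hx.le] at this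
    exact this
  have hd : ry - rx ≤ nL (x - y) := by
    have h1 : nL y ≤ nL (y - x) + nL x := by
      calc nL y = nL ((y - x) + x) := by ring_nf
        _ ≤ nL (y - x) + nL x := map_add_le_add nL _ _
    have h2 : nL (y - x) = nL (x - y) := by rw [← neg_sub, map_neg_eq_map]
    rw [h2] at h1
    linarith
  have hdnn : 0 ≤ nL (x - y) := apply_nonneg nL _
  have hdecomp : (u rx / rx) • x - (u ry / ry) • y
      = (u rx / rx) • (x - y) + (u rx / rx - u ry / ry) • y := by
    rw [smul_sub, sub_smul]; abel
  have hbound1 : nL ((u rx / rx) • (x - y)) ≤ Lu * nL (x - y) := by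
    rw [map_smul_eq_mul]
    have h3 : ‖u rx / rx‖ ≤ Lu := by
      rw [Real.norm_eq_abs, abs_of_nonneg (div_nonneg hux hx.le), div_le_iff₀ hx]
      linarith
    exact mul_le_mul_of_nonneg_right h3 hdnn |>.trans_eq rfl
  have hnum : |u rx * ry - u ry * rx| ≤ 2 * Lu * rx * (ry - rx) := by
    have h4 : u rx * ry - u ry * rx = u rx * (ry - rx) + rx * (u rx - u ry) := by ring
    have h5 : |u rx - u ry| ≤ Lu * (ry - rx) := by
      have := hulip rx ry hx.le hy.le
      rwa [abs_of_nonpos (by linarith : rx - ry ≤ 0), neg_sub] at this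
    calc |u rx * ry - u ry * rx| = |u rx * (ry - rx) + rx * (u rx - u ry)| := by rw [h4]
      _ ≤ |u rx * (ry - rx)| + |rx * (u rx - u ry)| := abs_add_le _ _
      _ = u rx * (ry - rx) + rx * |u rx - u ry| := by
          rw [abs_of_nonneg (mul_nonneg hux (by linarith)), abs_mul, abs_of_nonneg hx.le]
      _ ≤ Lu * rx * (ry - rx) + rx * (Lu * (ry - rx)) := by
          have := mul_le_mul_of_nonneg_right huxb (by linarith : (0:ℝ) ≤ ry - rx)
          have := mul_le_mul_of_nonneg_left h5 hx.le
          nlinarith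
      _ = 2 * Lu * rx * (ry - rx) := by ring
  have hbound2 : nL ((u rx / rx - u ry / ry) • y) ≤ 2 * Lu * nL (x - y) := by
    rw [map_smul_eq_mul, Real.norm_eq_abs]
    have hdiff : u rx / rx - u ry / ry = (u rx * ry - u ry * rx) / (rx * ry) := by
      field_simp
    rw [hdiff, abs_div, abs_of_pos (mul_pos hx hy)]
    have : |u rx * ry - u ry * rx| / (rx * ry) * ry = |u rx * ry - u ry * rx| / rx := by
      field_simp
    rw [this]
    rw [div_le_iff₀ hx]
    calc |u rx * ry - u ry * rx| ≤ 2 * Lu * rx * (ry - rx) := hnum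
      _ ≤ 2 * Lu * rx * nL (x - y) := by nlinarith
      _ = 2 * Lu * nL (x - y) * rx := by ring
  calc nL ((u rx / rx) • x - (u ry / ry) • y)
      = nL ((u rx / rx) • (x - y) + (u rx / rx - u ry / ry) • y) := by rw [hdecomp]
    _ ≤ nL ((u rx / rx) • (x - y)) + nL ((u rx / rx - u ry / ry) • y) := map_add_le_add nL _ _
    _ ≤ Lu * nL (x - y) + 2 * Lu * nL (x - y) := add_le_add hbound1 hbound2
    _ = 3 * Lu * nL (x - y) := by ring

lemma lipU {n : ℕ} (nL : Seminorm ℝ (Fin n → ℝ))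
    (hLdef : ∀ x, nL x = 0 → x = 0)
    (u : ℝ → ℝ) (Lu : ℝ) (hLu : 0 ≤ Lu) (hu0 : u 0 = 0)
    (hunn : ∀ t, 0 ≤ t → 0 ≤ u t)
    (hulip : ∀ s t, 0 ≤ s → 0 ≤ t → |u s - u t| ≤ Lu * |s - t|)
    (haux : ∀ x y : Fin n → ℝ, 0 < nL x → nL x ≤ nL y →
      nL ((u (nL x) / nL x) • x - (u (nL y) / nL y) • y) ≤ 3 * Lu * nL (x - y))
    (x y : Fin n → ℝ) :
    nL ((u (nL x) / nL x) • x - (u (nL y) / nL y) • y) ≤ 3 * Lu * nL (x - y) := by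
  have hsymm : ∀ a b : Fin n → ℝ, nL (a - b) = nL (b - a) := by
    intro a b; rw [← neg_sub, map_neg_eq_map]
  have hzero : ∀ z : Fin n → ℝ, nL z = 0 →
      ∀ w : Fin n → ℝ, nL ((u (nL z) / nL z) • z - (u (nL w) / nL w) • w)
        ≤ 3 * Lu * nL (z - w) := by
    intro z hz w
    have hz0 : z = 0 := hLdef z hz
    subst hz0
    simp only [smul_zero, zero_sub, map_neg_eq_map]
    rcases eq_or_lt_of_le (apply_nonneg nL w) with hw | hw
    · have hw0 : w = 0 := hLdef w hw.symm
      subst hw0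
      simp
    · have : nL ((u (nL w) / nL w) • w) = |u (nL w) / nL w| * nL w := by
        rw [map_smul_eq_mul, Real.norm_eq_abs]
      rw [this, abs_of_nonneg (div_nonneg (hunn _ hw.le) hw.le), div_mul_cancel₀ _ hw.ne']
      have huwb : u (nL w) ≤ Lu * nL w := by
        have := hulip (nL w) 0 hw.le le_rfl
        rw [hu0, sub_zero, sub_zero, abs_of_nonneg (hunn _ hw.le), abs_of_nonneg hw.le] at this
        exact this
      nlinarith [apply_nonneg nL w]
  rcases eq_or_lt_of_le (apply_nonneg nL x) with hx | hx
  · exact hzero x hx.symm y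
  rcases eq_or_lt_of_le (apply_nonneg nL y) with hy | hy
  · have := hzero y hy.symm x
    calc nL ((u (nL x) / nL x) • x - (u (nL y) / nL y) • y)
        = nL ((u (nL y) / nL y) • y - (u (nL x) / nL x) • x) := hsymm _ _
      _ ≤ 3 * Lu * nL (y - x) := this
      _ = 3 * Lu * nL (x - y) := by rw [hsymm y x]
  rcases le_total (nL x) (nL y) with h | h
  · exact haux x y hx h
  · calc nL ((u (nL x) / nL x) • x - (u (nL y) / nL y) • y)
        = nL ((u (nL y) / nL y) • y - (u (nL x) / nL x) • x) := hsymm _ _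
      _ ≤ 3 * Lu * nL (y - x) := haux y x hy h
      _ = 3 * Lu * nL (x - y) := by rw [hsymm y x]

lemma nL_continuous {n : ℕ} (nL : Seminorm ℝ (Fin n → ℝ)) :
    Continuous fun x : Fin n → ℝ => nL x := by
  classical
  set e : Fin n → (Fin n → ℝ) := fun i => fun j => if i = j then (1:ℝ) else 0 with he
  set C : ℝ := ∑ i : Fin n, nL (e i) with hC
  have hCnn : 0 ≤ C := Finset.sum_nonneg fun i _ => apply_nonneg nL _
  have hbound : ∀ z : Fin n → ℝ, nL z ≤ C * ‖z‖ := by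
    intro z
    calc nL z = nL (∑ i : Fin n, z i • e i) := by rw [← pi_eq_sum_univ z]
      _ ≤ ∑ i : Fin n, nL (z i • e i) :=
          Finset.le_sum_of_subadditive (fun v => nL v) (map_zero nL).le
            (fun a b => map_add_le_add nL a b) _ _
      _ = ∑ i : Fin n, |z i| * nL (e i) := by
          refine Finset.sum_congr rfl fun i _ => ?_
          rw [map_smul_eq_mul, Real.norm_eq_abs]
      _ ≤ ∑ i : Fin n, ‖z‖ * nL (e i) := by
          refine Finset.sum_le_sum fun i _ => ?_
          exact mul_le_mul_of_nonneg_right (by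
            simpa [Real.norm_eq_abs] using norm_le_pi_norm z i) (apply_nonneg nL _)
      _ = C * ‖z‖ := by rw [← Finset.mul_sum, mul_comm]
  have hlip : LipschitzWith ⟨C, hCnn⟩ fun x : Fin n → ℝ => nL x := by
    apply LipschitzWith.of_dist_le_mul
    intro a b
    simp only [NNReal.coe_mk, Real.dist_eq, dist_eq_norm]
    have h1 : nL a - nL b ≤ nL (a - b) := by
      have := map_add_le_add nL (a - b) b
      simp only [sub_add_cancel] at this
      linarith
    have h2 : nL b - nL a ≤ nL (a - b) := by
      have h := map_add_le_add nL (b - a) a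
      simp only [sub_add_cancel] at h
      have h3 : nL (b - a) = nL (a - b) := by rw [← neg_sub, map_neg_eq_map]
      rw [h3] at h
      linarith
    have hb := hbound (a - b)
    change _ ≤ C * _
    rw [Real.norm_eq_abs, abs_le]
    constructor <;> linarith
  exact hlip.continuous

lemma U_measurable {n : ℕ} (nL : Seminorm ℝ (Fin n → ℝ))
    (u : ℝ → ℝ) (Lu : ℝ) (hLu : 0 ≤ Lu)
    (hulip : ∀ s t, 0 ≤ s → 0 ≤ t → |u s - u t| ≤ Lu * |s - t|) :
    Measurable fun x : Fin n → ℝ => (u (nL x) / nL x) • x := by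
  have hvlip : LipschitzWith ⟨Lu, hLu⟩ fun t : ℝ => u (max t 0) := by
    apply LipschitzWith.of_dist_le_mul
    intro a b
    rw [Real.dist_eq, Real.dist_eq]
    calc |u (max a 0) - u (max b 0)| ≤ Lu * |max a 0 - max b 0| :=
          hulip _ _ (le_max_right _ _) (le_max_right _ _)
      _ ≤ Lu * |a - b| := by
          apply mul_le_mul_of_nonneg_left _ hLu
          exact abs_max_sub_max_le_abs a b 0
  have hnLc : Continuous fun x : Fin n → ℝ => nL x := nL_continuous nL
  have hw : Continuous fun x : Fin n → ℝ => u (max (nL x) 0) :=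
    hvlip.continuous.comp hnLc
  have hweq : ∀ x : Fin n → ℝ, u (max (nL x) 0) = u (nL x) := by
    intro x; rw [max_eq_left (apply_nonneg nL x)]
  have hcm : Measurable fun x : Fin n → ℝ => u (nL x) / nL x := by
    have : Measurable fun x : Fin n → ℝ => u (nL x) := by
      have := hw.measurable
      simpa only [hweq] using this
    exact this.div hnLc.measurable
  apply measurable_pi_lambda
  intro i
  have : ∀ x : Fin n → ℝ, ((u (nL x) / nL x) • x) i = (u (nL x) / nL x) * x i := by
    intro x; simp [Pi.smul_apply, smul_eq_mul]
  simp only [this]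
  exact hcm.mul (measurable_pi_apply i)

theorem stmt14 {n : ℕ} (nK nL : Seminorm ℝ (Fin n → ℝ))
    (hLdef : ∀ x, nL x = 0 → x = 0)
    (lam : ℝ) (hlam : 1 ≤ lam)
    (h1 : ∀ x, nK x ≤ nL x) (h2 : ∀ x, nL x ≤ lam * nK x)
    (u : ℝ → ℝ) (Lu : ℝ) (hLupos : 0 < Lu) (hu0 : u 0 = 0)
    (hunn : ∀ t, 0 ≤ t → 0 ≤ u t)
    (hulip : ∀ s t, 0 ≤ s → 0 ≤ t → |u s - u t| ≤ Lu * |s - t|)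
    (μ : Measure (Fin n → ℝ)) [IsProbabilityMeasure μ]
    (mL m : ℝ) (hmL : IsMedian μ (fun x => nL x) mL)
    (hm : IsMedian μ (fun x => u (nL x)) m) (hmLpos : 0 < mL)
    (ε : ℝ) (hε : 0 < ε)
    (hsmall : 8 * (concFn (fun x y => nK (x - y)) μ (ε / (7 * Lu * lam)) +
      concFn (fun x y => nK (x - y)) μ (ε * m / (7 * Lu^2 * mL))) ≤ 1) :
    concFn (fun x y => nL (x - y))
        (μ.map (fun x => (u (nL x) / nL x) • x)) ε ≤
      16 * concFn (fun x y => nK (x - y)) μ (ε / (14 * Lu * lam)) := by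
  have hlam0 : 0 < lam := lt_of_lt_of_le one_pos hlam
  set U : (Fin n → ℝ) → (Fin n → ℝ) := fun x => (u (nL x) / nL x) • x with hUdef
  have hU : Measurable U := U_measurable nL u Lu hLupos.le hulip
  set δ : ℝ := ε / (14 * Lu * lam) with hδdef
  have hδpos : 0 < δ := by positivity
  set SK : Set ℝ := {r | ∃ A : Set (Fin n → ℝ), MeasurableSet A ∧
      (1 : ℝ)/2 ≤ (μ A).toReal ∧ r = 1 - (μ (expandBy (fun x y => nK (x - y)) A δ)).toReal}
      with hSK
  have hbddK : BddAbove SK := by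
    refine ⟨1, ?_⟩
    rintro r ⟨A, -, -, rfl⟩
    have := ENNReal.toReal_nonneg (a := μ (expandBy (fun x y => nK (x - y)) A δ))
    linarith
  have halphaK : concFn (fun x y => nK (x - y)) μ δ = sSup SK := rfl
  have hzero_mem : (0 : ℝ) ∈ SK := by
    refine ⟨univ, MeasurableSet.univ, by simp; norm_num, ?_⟩
    have hexp : expandBy (fun x y => nK (x - y)) univ δ = univ := by
      ext x
      simp only [expandBy, mem_setOf_eq, mem_univ, iff_true]
      exact ⟨x, trivial, by simpa using hδpos.le⟩
    rw [hexp]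
    simp
  have halphaK_nonneg : 0 ≤ concFn (fun x y => nK (x - y)) μ δ := by
    rw [halphaK]
    exact le_csSup hbddK hzero_mem
  apply Real.sSup_le
  · rintro r ⟨A, hA, hAhalf, rfl⟩
    set E : Set (Fin n → ℝ) := expandBy (fun x y => nL (x - y)) A ε with hE
    set B : Set (Fin n → ℝ) := U ⁻¹' A with hB
    have hBmeas : MeasurableSet B := hU hA
    have hmapA : (μ.map U) A = μ B := Measure.map_apply hU hA
    have hBhalf : (1 : ℝ)/2 ≤ (μ B).toReal := by rw [← hmapA]; exact hAhalf
    have hsub : expandBy (fun x y => nK (x - y)) B δ ⊆ U ⁻¹' E := by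
      rintro x ⟨b, hbB, hd⟩
      refine ⟨U b, hbB, ?_⟩
      have hlip3 : nL (U x - U b) ≤ 3 * Lu * nL (x - b) :=
        lipU nL hLdef u Lu hLupos.le hu0 hunn hulip (fun a c ha hac => lip_aux nL u Lu hLupos.le hu0 hunn hulip a c ha hac) x b
      have hKL : nL (x - b) ≤ lam * nK (x - b) := h2 _
      have hd' : nK (x - b) ≤ δ := hd
      have hstep : nL (x - b) ≤ lam * δ :=
        hKL.trans (mul_le_mul_of_nonneg_left hd' hlam0.le)
      have : nL (U x - U b) ≤ 3 * Lu * (lam * δ) :=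
        hlip3.trans (mul_le_mul_of_nonneg_left hstep (by positivity))
      have hcalc : 3 * Lu * (lam * δ) ≤ ε := by
        rw [hδdef]
        rw [div_eq_mul_inv]
        have : 3 * Lu * (lam * (ε * (14 * Lu * lam)⁻¹)) = (3 / 14) * ε := by
          field_simp
        rw [this]
        linarith
      exact this.trans hcalc
    have hmemK : 1 - (μ (expandBy (fun x y => nK (x - y)) B δ)).toReal ∈ SK :=
      ⟨B, hBmeas, hBhalf, rfl⟩
    have hstep1 : 1 - (μ (expandBy (fun x y => nK (x - y)) B δ)).toReal ≤
        concFn (fun x y => nK (x - y)) μ δ := by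
      rw [halphaK]; exact le_csSup hbddK hmemK
    have hchain : μ (expandBy (fun x y => nK (x - y)) B δ) ≤ (μ.map U) E :=
      le_trans (measure_mono hsub) (Measure.le_map_apply hU.aemeasurable E)
    have hEfin : (μ.map U) E ≠ ⊤ := by
      have h5 : (μ.map U) E ≤ (μ.map U) univ := measure_mono (subset_univ E)
      have h6 : (μ.map U) univ = μ univ := by
        rw [Measure.map_apply hU MeasurableSet.univ, preimage_univ]
      rw [h6, measure_univ] at h5
      exact ne_top_of_le_ne_top ENNReal.one_ne_top h5
    have hstep2 : (μ (expandBy (fun x y => nK (x - y)) B δ)).toReal ≤ ((μ.map U) E).toReal :=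
      ENNReal.toReal_mono hEfin hchain
    linarith
  · linarith
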